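/- Let A = (Σ, Q, δ) be a strongly connected semi-automaton with n states. If sc(Syn(A)) = 2^n - n, then A is completely reachable. -/

import Mathlib

open Finset

universe u v

variable {Q : Type u} {A : Type v}

/-- Extended transition function on words (lists of letters). -/
def dw (δ : Q → A → Q) (q : Q) (w : List A) : Q := w.foldl δ q

/-- A subset `S` of the state set is reachable if it is the image of the
full state set under some word. -/
def reach [Fintype Q] [DecidableEq Q] (δ : Q → A → Q) (S : Finset Q) : Prop :=
  ∃ w : List A, Finset.univ.image (fun q => dw δ q w) = S

/-- Rank of a word: cardinality of the image of the state set under it. -/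
def rkw [Fintype Q] [DecidableEq Q] (δ : Q → A → Q) (w : List A) : ℕ :=
  (Finset.univ.image (fun q => dw δ q w)).card

/-- Rank of a letter. -/
def rkl [Fintype Q] [DecidableEq Q] (δ : Q → A → Q) (a : A) : ℕ :=
  (Finset.univ.image (fun q => δ q a)).card

/-- A map is a cyclic permutation with a single orbit. -/
def isCyclicPerm (f : Q → Q) : Prop :=
  Function.Bijective f ∧ ∀ p q : Q, ∃ k : ℕ, f^[k] p = q

/-- Two subsets of states are distinguishable in the power automaton:
some word maps exactly one of them to a singleton. -/
def distinguishable [DecidableEq Q] (δ : Q → A → Q) (S T : Finset Q) : Prop :=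
  ∃ u : List A,
    Xor' ((S.image (fun q => dw δ q u)).card = 1)
         ((T.image (fun q => dw δ q u)).card = 1)

/-- The set of synchronizing words. -/
def Syn [Fintype Q] [DecidableEq Q] (δ : Q → A → Q) : Set (List A) :=
  {w | (Finset.univ.image (fun q => dw δ q w)).card = 1}

/-- The Nerode right-congruence of a language. -/
def nerode (L : Set (List A)) : Setoid (List A) where
  r u v := ∀ x : List A, u ++ x ∈ L ↔ v ++ x ∈ L
  iseqv := ⟨fun _ _ => Iff.rfl, fun h x => (h x).symm, fun h1 h2 x => (h1 x).trans (h2 x)⟩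

/-- State complexity of a language: number of Nerode classes. -/
noncomputable def sc (L : Set (List A)) : ℕ := Nat.card (Quotient (nerode L))

/-- Complete reachability. -/
def complReach [Fintype Q] [DecidableEq Q] (δ : Q → A → Q) : Prop :=
  ∀ S : Finset Q, S.Nonempty → ∃ w : List A, Finset.univ.image (fun q => dw δ q w) = S

/-- The permutation group generated by the permutational letters. -/
def permGroup [Fintype Q] [DecidableEq Q] (δ : Q → A → Q) : Subgroup (Equiv.Perm Q) :=
  Subgroup.closure {π : Equiv.Perm Q | ∃ a : A, ∀ q : Q, π q = δ q a}

theorem complReach_of_strongly_connected_sc_max [Fintype Q] [DecidableEq Q]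
    (δ : Q → A → Q) (n : ℕ) (hn : Fintype.card Q = n)
    (hsc : ∀ p q : Q, ∃ w : List A, dw δ p w = q)
    (h : sc (Syn δ) = 2 ^ n - n) :
    complReach δ := by
  classical
  intro S hS
  cases isEmpty_or_nonempty Q with
  | inl hQ => exact (hQ.false hS.choose).elim
  | inr hQ =>
  -- image of the state set under a word
  set Im : List A → Finset Q := fun w => Finset.univ.image (fun q => dw δ q w) with hImdef
  have hIm_append : ∀ u v : List A, Im (u ++ v) = (Im u).image (fun q => dw δ q v) := by
    intro u v
    simp [hImdef, Finset.image_image, dw, List.foldl_append, Function.comp_def]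
  have hIm_ne : ∀ w : List A, (Im w).Nonempty := fun w =>
    (Finset.univ_nonempty).image _
  have hSynIff : ∀ w : List A, w ∈ Syn δ ↔ (Im w).card = 1 := fun w => Iff.rfl
  -- merge singleton images into a single token
  set g : List A → Option (Finset Q) :=
    fun w => if (Im w).card = 1 then none else some (Im w) with hgdef
  have hg : ∀ u v : List A, g u = g v → (nerode (Syn δ)).r u v := by
    intro u v huv x
    by_cases h1 : (Im u).card = 1
    · have h2 : (Im v).card = 1 := by
        by_contra h2
        simp [hgdef, h1, h2] at huv
      have key : ∀ w : List A, (Im w).card = 1 → w ++ x ∈ Syn δ := by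
        intro w hw
        obtain ⟨p, hp⟩ := Finset.card_eq_one.mp hw
        have : Im (w ++ x) = {dw δ p x} := by
          rw [hIm_append, hp, Finset.image_singleton]
        rw [hSynIff, this, Finset.card_singleton]
      exact iff_of_true (key u h1) (key v h2)
    · have h2 : ¬ (Im v).card = 1 := by
        by_contra h2
        simp [hgdef, h1, h2] at huv
      have him : Im u = Im v := by
        have := huv
        simp [hgdef, h1, h2] at this
        exact this
      rw [hSynIff, hSynIff, hIm_append, hIm_append, him]
  -- surjection from range of g onto the Nerode quotient
  have hsurj : ∃ f : Set.range g → Quotient (nerode (Syn δ)), Function.Surjective f := by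
    refine ⟨fun x => Quotient.mk (nerode (Syn δ)) (Classical.choose x.2), ?_⟩
    intro c
    induction c using Quotient.ind with
    | _ w =>
      refine ⟨⟨g w, ⟨w, rfl⟩⟩, ?_⟩
      exact Quot.sound (hg _ _ (Classical.choose_spec (⟨w, rfl⟩ : ∃ u, g u = g w)))
  obtain ⟨f, hf⟩ := hsurj
  have hcard1 : Nat.card (Quotient (nerode (Syn δ))) ≤ Nat.card (Set.range g) :=
    Nat.card_le_card_of_surjective f hf
  -- the target set
  set Tset : Set (Option (Finset Q)) :=
    insert none (some '' {T : Finset Q | T.Nonempty ∧ T.card ≠ 1}) with hTdef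
  have hsub : Set.range g ⊆ Tset := by
    rintro _ ⟨w, rfl⟩
    by_cases h1 : (Im w).card = 1
    · simp [hgdef, h1, hTdef]
    · right
      exact ⟨Im w, ⟨hIm_ne w, h1⟩, by simp [hgdef, h1]⟩
  -- upper bound on the size of Tset
  have hn1 : n + 1 ≤ 2 ^ n := Nat.lt_two_pow_self (n := n)
  have hTcard : Tset.ncard ≤ 2 ^ n - n := by
    have hfin : Tset = ↑(insert (none : Option (Finset Q))
        ((Finset.univ.filter (fun T : Finset Q => T.Nonempty ∧ T.card ≠ 1)).image some)) := by
      ext x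
      simp [hTdef]
    rw [hfin, Set.ncard_coe_finset]
    have hF : (Finset.univ.filter (fun T : Finset Q => T.Nonempty ∧ T.card ≠ 1)).card
        ≤ 2 ^ n - (n + 1) := by
      set G : Finset (Finset Q) :=
        insert ∅ (Finset.univ.image (fun q : Q => ({q} : Finset Q))) with hGdef
      have hdisj : Finset.univ.filter (fun T : Finset Q => T.Nonempty ∧ T.card ≠ 1)
          ⊆ Finset.univ \ G := by
        intro T hT
        simp only [Finset.mem_filter] at hT
        simp only [Finset.mem_sdiff, Finset.mem_univ, true_and, hGdef, Finset.mem_insert,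
          Finset.mem_image]
        push_neg
        refine ⟨?_, ?_⟩
        · exact hT.2.1
        · intro q hq
          exact hT.2.2 (hq ▸ Finset.card_singleton q)
      have hne : (∅ : Finset Q) ∉ Finset.univ.image (fun q : Q => ({q} : Finset Q)) := by
        simp only [Finset.mem_image, Finset.mem_univ, true_and]
        rintro ⟨q, hq⟩
        exact Finset.singleton_ne_empty q hq
      have hGcard : G.card = n + 1 := by
        rw [hGdef, Finset.card_insert_of_notMem hne, Finset.card_image_of_injective _
          Finset.singleton_injective, Finset.card_univ, hn]
      have huniv : (Finset.univ : Finset (Finset Q)).card = 2 ^ n := by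
        rw [Finset.card_univ, Fintype.card_finset, hn]
      calc (Finset.univ.filter (fun T : Finset Q => T.Nonempty ∧ T.card ≠ 1)).card
          ≤ (Finset.univ \ G).card := Finset.card_le_card hdisj
        _ = 2 ^ n - (n + 1) := by
            rw [Finset.card_sdiff_of_subset (Finset.subset_univ _), huniv, hGcard]
    calc (insert (none : Option (Finset Q))
        ((Finset.univ.filter (fun T : Finset Q => T.Nonempty ∧ T.card ≠ 1)).image some)).card
        ≤ ((Finset.univ.filter (fun T : Finset Q => T.Nonempty ∧ T.card ≠ 1)).image some).card
          + 1 := Finset.card_insert_le _ _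
      _ ≤ (2 ^ n - (n + 1)) + 1 := by
          have := Finset.card_image_le (s := Finset.univ.filter
            (fun T : Finset Q => T.Nonempty ∧ T.card ≠ 1)) (f := some)
          omega
      _ ≤ 2 ^ n - n := by omega
  -- equality
  have hge : 2 ^ n - n ≤ (Set.range g).ncard := by
    have : sc (Syn δ) ≤ Nat.card (Set.range g) := hcard1
    rw [h] at this
    rwa [Nat.card_coe_set_eq] at this
  have heq : Set.range g = Tset :=
    Set.eq_of_subset_of_ncard_le hsub (le_trans hTcard hge) (Set.toFinite _)
  -- extract reachability facts
  have hnone : ∃ w : List A, (Im w).card = 1 := by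
    have : (none : Option (Finset Q)) ∈ Set.range g := heq ▸ Set.mem_insert _ _
    obtain ⟨w, hw⟩ := this
    refine ⟨w, ?_⟩
    by_contra h1
    simp [hgdef, h1] at hw
  have hsome : ∀ T : Finset Q, T.Nonempty → T.card ≠ 1 → ∃ w : List A, Im w = T := by
    intro T hTne hT1
    have : (some T : Option (Finset Q)) ∈ Set.range g := by
      rw [heq]
      exact Set.mem_insert_of_mem _ ⟨T, ⟨hTne, hT1⟩, rfl⟩
    obtain ⟨w, hw⟩ := this
    by_cases h1 : (Im w).card = 1
    · simp [hgdef, h1] at hw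
    · refine ⟨w, ?_⟩
      simpa [hgdef, h1] using hw
  -- conclude
  by_cases hS1 : S.card = 1
  · obtain ⟨q, hq⟩ := Finset.card_eq_one.mp hS1
    obtain ⟨w₀, hw₀⟩ := hnone
    obtain ⟨p, hp⟩ := Finset.card_eq_one.mp hw₀
    obtain ⟨u, hu⟩ := hsc p q
    refine ⟨w₀ ++ u, ?_⟩
    have : Im (w₀ ++ u) = {q} := by
      rw [hIm_append, hp, Finset.image_singleton, hu]
    rw [hq]
    exact this
  · obtain ⟨w, hw⟩ := hsome S hS hS1
    exact ⟨w, hw⟩
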